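/- Let w : [0,∞) → W be Lebesgue-measurable and let x : [0,∞) → ℝⁿ be differentiable with ẋ(t) = A(w(t)) x(t) for all t ≥ 0. If x(t) converges to some x̄ ∈ ℝⁿ as t → ∞, then the averages (1/T) ∫₀ᵀ A(w(t)) x̄ dt converge to 0 as T → ∞. -/

import Mathlib

open Matrix Filter

/-- `w` lies in the unit simplex `W ⊆ ℝ^M`. -/
def InSimplex {M : ℕ} (w : Fin M → ℝ) : Prop :=
  (∀ i, 0 ≤ w i) ∧ ∑ i, w i = 1

/-- The convex combination `A(w) = ∑ᵢ wᵢ Aᵢ`. -/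
def Amix {n M : ℕ} (A : Fin M → Matrix (Fin n) (Fin n) ℝ) (w : Fin M → ℝ) :
    Matrix (Fin n) (Fin n) ℝ :=
  ∑ i, w i • A i

/-- `x` is a solution of the difference inclusion generated by `A₁, …, A_M`. -/
def IsInclusionSolution {n M : ℕ} (A : Fin M → Matrix (Fin n) (Fin n) ℝ)
    (x : ℕ → Fin n → ℝ) : Prop :=
  ∃ w : ℕ → Fin M → ℝ, (∀ k, InSimplex (w k)) ∧
    ∀ k, x (k + 1) = (Amix A (w k)) *ᵥ (x k)

/-- Weak convergence: every solution of the difference inclusion has a limit. -/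
def WeaklyConvergent {n M : ℕ} (A : Fin M → Matrix (Fin n) (Fin n) ℝ) : Prop :=
  ∀ x : ℕ → Fin n → ℝ, IsInclusionSolution A x →
    ∃ xbar : Fin n → ℝ, Tendsto x atTop (nhds xbar)

/-- Strong convergence: every solution converges to a point of `⋂ᵢ ker(Aᵢ − I)`. -/
def StronglyConvergent {n M : ℕ} (A : Fin M → Matrix (Fin n) (Fin n) ℝ) : Prop :=
  ∀ x : ℕ → Fin n → ℝ, IsInclusionSolution A x →
    ∃ xbar : Fin n → ℝ, (∀ i, (A i - 1) *ᵥ xbar = 0) ∧ Tendsto x atTop (nhds xbar)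

open MeasureTheory in
/-- Cesàro mean of an integrable function tending to `0` tends to `0`. -/
lemma cesaro_integral {E : Type*} [NormedAddCommGroup E] [NormedSpace ℝ E] (h : ℝ → E)
    (hint : ∀ T : ℝ, 0 ≤ T → IntervalIntegrable h volume 0 T)
    (hlim : Tendsto h atTop (nhds 0)) :
    Tendsto (fun T : ℝ => (1 / T) • ∫ t in (0:ℝ)..T, h t) atTop (nhds 0) := by
  rw [NormedAddCommGroup.tendsto_nhds_zero]
  intro ε hε
  have hε3 : 0 < ε / 3 := by linarith
  obtain ⟨T₁, hT₁⟩ := (Filter.eventually_atTop).mp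
    ((NormedAddCommGroup.tendsto_nhds_zero.mp hlim) (ε/3) hε3)
  set T₀ : ℝ := max T₁ 0 with hT₀def
  have hT₀0 : 0 ≤ T₀ := le_max_right _ _
  set K : ℝ := ‖∫ t in (0:ℝ)..T₀, h t‖ with hK
  have hK0 : 0 ≤ K := norm_nonneg _
  filter_upwards [eventually_ge_atTop (max T₀ 1), eventually_gt_atTop (K / (ε/3))]
    with T hTge hTK
  have hT1 : (1:ℝ) ≤ T := le_trans (le_max_right _ _) hTge
  have hT0 : 0 < T := lt_of_lt_of_le one_pos hT1
  have hTT₀ : T₀ ≤ T := le_trans (le_max_left _ _) hTge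
  have hii : IntervalIntegrable h volume T₀ T :=
    (hint T₀ hT₀0).symm.trans (hint T (le_trans hT₀0 hTT₀))
  have hsplit : ∫ t in (0:ℝ)..T, h t = (∫ t in (0:ℝ)..T₀, h t) + ∫ t in T₀..T, h t :=
    (intervalIntegral.integral_add_adjacent_intervals (hint T₀ hT₀0) hii).symm
  have htail : ‖∫ t in T₀..T, h t‖ ≤ ε/3 * |T - T₀| := by
    apply intervalIntegral.norm_integral_le_of_norm_le_const
    intro t ht
    rw [Set.uIoc_of_le hTT₀] at ht
    exact le_of_lt (hT₁ t (le_trans (le_max_left _ _) (le_of_lt ht.1)))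
  calc ‖(1 / T) • ∫ t in (0:ℝ)..T, h t‖
      = (1/T) * ‖∫ t in (0:ℝ)..T, h t‖ := by
        rw [norm_smul, Real.norm_eq_abs, abs_of_pos (by positivity)]
    _ ≤ (1/T) * (K + ε/3 * |T - T₀|) := by
        apply mul_le_mul_of_nonneg_left _ (by positivity)
        rw [hsplit]
        exact le_trans (norm_add_le _ _) (add_le_add le_rfl htail)
    _ < ε := by
        rw [abs_of_nonneg (by linarith)]
        have h1 : (1/T) * K < ε/3 := by
          rw [div_mul_eq_mul_div, one_mul, div_lt_iff₀ hT0]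
          have := (div_lt_iff₀ hε3).mp hTK
          linarith [mul_comm T (ε/3)]
        have h2 : (1/T) * (ε/3 * (T - T₀)) ≤ ε/3 := by
          rw [div_mul_eq_mul_div, one_mul, div_le_iff₀ hT0]
          nlinarith
        have := mul_add (1/T) K (ε/3 * (T - T₀))
        nlinarith [mul_pos (by positivity : (0:ℝ) < 1/T) hε3]

lemma amix_expand {n M : ℕ} (A : Fin M → Matrix (Fin n) (Fin n) ℝ)
    (v : Fin M → ℝ) (y : Fin n → ℝ) :
    Amix A v *ᵥ y = ∑ i, v i • (A i *ᵥ y) := by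
  ext j
  simp only [Amix, Matrix.mulVec, dotProduct, Finset.sum_apply, Matrix.sum_apply, Pi.smul_apply,
    Matrix.smul_apply, smul_eq_mul, Finset.sum_mul, Finset.mul_sum]
  rw [Finset.sum_comm]
  exact Finset.sum_congr rfl fun i _ => Finset.sum_congr rfl fun k _ => by ring

lemma amix_mulVec_norm_le {n M : ℕ} (A : Fin M → Matrix (Fin n) (Fin n) ℝ)
    {w : Fin M → ℝ} (hw : InSimplex w) (u : Fin n → ℝ) :
    ‖Amix A w *ᵥ u‖ ≤ (∑ i, ‖LinearMap.toContinuousLinearMap (Matrix.mulVecLin (A i))‖) * ‖u‖ := by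
  rw [amix_expand, Finset.sum_mul]
  refine le_trans (norm_sum_le _ _) (Finset.sum_le_sum fun i _ => ?_)
  rw [norm_smul, Real.norm_eq_abs, abs_of_nonneg (hw.1 i)]
  have hwi1 : w i ≤ 1 := by
    rw [← hw.2]
    exact Finset.single_le_sum (fun j _ => hw.1 j) (Finset.mem_univ i)
  have hnorm : ‖A i *ᵥ u‖ ≤ ‖LinearMap.toContinuousLinearMap (Matrix.mulVecLin (A i))‖ * ‖u‖ := by
    have := (LinearMap.toContinuousLinearMap (Matrix.mulVecLin (A i))).le_opNorm u
    simpa using this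
  calc w i * ‖A i *ᵥ u‖ ≤ 1 * ‖A i *ᵥ u‖ :=
        mul_le_mul_of_nonneg_right hwi1 (norm_nonneg _)
    _ = ‖A i *ᵥ u‖ := one_mul _
    _ ≤ _ := hnorm

open MeasureTheory in
lemma integrable_aux {n M : ℕ} (A : Fin M → Matrix (Fin n) (Fin n) ℝ)
    (w : ℝ → Fin M → ℝ) (hmeas : Measurable w)
    (hw : ∀ t : ℝ, 0 ≤ t → InSimplex (w t))
    (u : ℝ → Fin n → ℝ) (hu : ContinuousOn u (Set.Ici 0))
    (T : ℝ) (hT : 0 ≤ T) :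
    IntervalIntegrable (fun t => Amix A (w t) *ᵥ u t) volume 0 T := by
  rw [intervalIntegrable_iff_integrableOn_Ioc_of_le hT]
  set C : ℝ := ∑ i, ‖LinearMap.toContinuousLinearMap (Matrix.mulVecLin (A i))‖ with hC
  have hC0 : 0 ≤ C := Finset.sum_nonneg fun i _ => norm_nonneg _
  obtain ⟨B, hB⟩ := (isCompact_Icc (a := (0:ℝ)) (b := T)).exists_bound_of_continuousOn
    (hu.mono Set.Icc_subset_Ici_self)
  have huae : AEMeasurable u (volume.restrict (Set.Ioc 0 T)) := by
    have h1 : AEMeasurable u (volume.restrict (Set.Ici (0:ℝ))) :=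
      hu.aemeasurable measurableSet_Ici
    exact h1.mono_measure (Measure.restrict_mono
      (Set.Ioc_subset_Icc_self.trans Set.Icc_subset_Ici_self) le_rfl)
  have hsm : AEStronglyMeasurable (fun t => Amix A (w t) *ᵥ u t)
      (volume.restrict (Set.Ioc 0 T)) := by
    have key : AEMeasurable (fun t => ∑ i, w t i • (A i *ᵥ u t))
        (volume.restrict (Set.Ioc 0 T)) := by
      refine Finset.aemeasurable_fun_sum _ fun i _ => AEMeasurable.fun_smul ?_ ?_
      · exact ((measurable_pi_apply i).comp hmeas).aemeasurable
      · have hc : Continuous fun y : Fin n → ℝ => A i *ᵥ y :=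
          LinearMap.continuous_of_finiteDimensional (Matrix.mulVecLin (A i))
        exact hc.measurable.comp_aemeasurable huae
    have : AEMeasurable (fun t => Amix A (w t) *ᵥ u t) (volume.restrict (Set.Ioc 0 T)) :=
      key.congr (Filter.Eventually.of_forall fun t => (amix_expand A (w t) (u t)).symm)
    exact this.aestronglyMeasurable
  refine Integrable.mono' (g := fun _ => C * B) ?_ hsm ?_
  · exact integrableOn_const measure_Ioc_lt_top.ne
  · rw [ae_restrict_iff' measurableSet_Ioc]
    filter_upwards with t ht
    have ht0 : 0 ≤ t := le_of_lt ht.1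
    calc ‖Amix A (w t) *ᵥ u t‖ ≤ C * ‖u t‖ := amix_mulVec_norm_le A (hw t ht0) (u t)
      _ ≤ C * B := mul_le_mul_of_nonneg_left (hB t ⟨ht0, ht.2⟩) hC0

/-- if a solution `x(t)` of the differential inclusion converges to `x̄`,
then the averages `(1/T) ∫₀ᵀ A(w(t)) x̄ dt` converge to `0` as `T → ∞`. -/
theorem limit_in_average_kernel_ct
    (n M : ℕ) (A : Fin M → Matrix (Fin n) (Fin n) ℝ)
    (w : ℝ → Fin M → ℝ) (hmeas : Measurable w)
    (hw : ∀ t : ℝ, 0 ≤ t → InSimplex (w t))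
    (x : ℝ → Fin n → ℝ)
    (hx : ∀ t : ℝ, 0 ≤ t → HasDerivAt x ((Amix A (w t)) *ᵥ (x t)) t)
    (xbar : Fin n → ℝ) (hconv : Tendsto x atTop (nhds xbar)) :
    Tendsto (fun T : ℝ => (1 / T) • ∫ t in (0 : ℝ)..T, (Amix A (w t)) *ᵥ xbar)
      atTop (nhds 0) := by
  set C : ℝ := ∑ i, ‖LinearMap.toContinuousLinearMap (Matrix.mulVecLin (A i))‖ with hC
  have hC0 : 0 ≤ C := Finset.sum_nonneg fun i _ => norm_nonneg _
  have hxcont : ContinuousOn x (Set.Ici 0) := fun t ht =>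
    (hx t ht).continuousAt.continuousWithinAt
  have hucont : ContinuousOn (fun t => xbar - x t) (Set.Ici 0) :=
    continuousOn_const.sub hxcont
  have hf : ∀ T : ℝ, 0 ≤ T →
      IntervalIntegrable (fun t => Amix A (w t) *ᵥ x t) MeasureTheory.volume 0 T :=
    integrable_aux A w hmeas hw x hxcont
  have hh : ∀ T : ℝ, 0 ≤ T →
      IntervalIntegrable (fun t => Amix A (w t) *ᵥ (xbar - x t)) MeasureTheory.volume 0 T :=
    integrable_aux A w hmeas hw _ hucont
  have hFTC : ∀ T : ℝ, 0 ≤ T →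
      ∫ t in (0:ℝ)..T, Amix A (w t) *ᵥ x t = x T - x 0 := fun T hT =>
    intervalIntegral.integral_eq_sub_of_hasDerivAt
      (fun t ht => hx t (by rw [Set.uIcc_of_le hT] at ht; exact ht.1)) (hf T hT)
  have key : (fun T : ℝ => (1 / T) • ∫ t in (0:ℝ)..T, Amix A (w t) *ᵥ xbar) =ᶠ[atTop]
      fun T : ℝ => (1 / T) • (x T - x 0) +
        (1 / T) • ∫ t in (0:ℝ)..T, Amix A (w t) *ᵥ (xbar - x t) := by
    filter_upwards [eventually_ge_atTop (0:ℝ)] with T hT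
    have hsum : ∀ t : ℝ,
        Amix A (w t) *ᵥ xbar = Amix A (w t) *ᵥ x t + Amix A (w t) *ᵥ (xbar - x t) := by
      intro t
      rw [← Matrix.mulVec_add, add_sub_cancel]
    rw [intervalIntegral.integral_congr (g := fun t =>
        Amix A (w t) *ᵥ x t + Amix A (w t) *ᵥ (xbar - x t)) (fun t _ => hsum t),
      intervalIntegral.integral_add (hf T hT) (hh T hT), smul_add, hFTC T hT]
  have hinv : Tendsto (fun T : ℝ => 1 / T) atTop (nhds 0) := by
    simpa [one_div] using tendsto_inv_atTop_zero
  have h1 : Tendsto (fun T : ℝ => (1 / T) • (x T - x 0)) atTop (nhds 0) := by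
    have := hinv.smul (hconv.sub (tendsto_const_nhds (x := x 0)))
    simpa using this
  have hlim : Tendsto (fun t : ℝ => Amix A (w t) *ᵥ (xbar - x t)) atTop (nhds 0) := by
    rw [tendsto_zero_iff_norm_tendsto_zero]
    have hnlim : Tendsto (fun t : ℝ => C * ‖xbar - x t‖) atTop (nhds 0) := by
      have h0 : Tendsto (fun t : ℝ => xbar - x t) atTop (nhds 0) := by
        have := (tendsto_const_nhds (x := xbar)).sub hconv
        simpa using this
      have := tendsto_const_nhds (x := C) |>.mul h0.norm
      simpa using this
    refine squeeze_zero' (Filter.Eventually.of_forall fun t => norm_nonneg _) ?_ hnlim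
    filter_upwards [eventually_ge_atTop (0:ℝ)] with t ht
    exact amix_mulVec_norm_le A (hw t ht) _
  have h2 : Tendsto (fun T : ℝ =>
      (1 / T) • ∫ t in (0:ℝ)..T, Amix A (w t) *ᵥ (xbar - x t)) atTop (nhds 0) :=
    cesaro_integral _ hh hlim
  have := h1.add h2
  rw [add_zero] at this
  exact this.congr' key.symm
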